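/- Let f : Ω → 𝕆 be a slice function of class C¹ on a domain Ω ⊆ 𝕆. Then for every x ∈ Ω with Im(x) ≠ 0, the stem vector (u_x, v_x) of f at x satisfies 6·Im(x)·v_x = |Im(x)|·Γf(x), where Γ = -∑_{1≤m<n≤7} e_m(e_n L_{mn}) is the octonionic spherical Dirac operator and L_{mn} = x_m ∂/∂x_n - x_n ∂/∂x_m. -/

import Mathlib

noncomputable section

/-- The octonions, realized as the Cayley–Dickson double of the quaternions. -/
@[ext] structure Octonion : Type where
  a : Quaternion ℝ
  b : Quaternion ℝ

notation "𝕆" => Octonion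

namespace Octonion

instance : Zero 𝕆 := ⟨⟨0, 0⟩⟩
instance : One 𝕆 := ⟨⟨1, 0⟩⟩
instance : Add 𝕆 := ⟨fun x y => ⟨x.a + y.a, x.b + y.b⟩⟩
instance : Neg 𝕆 := ⟨fun x => ⟨-x.a, -x.b⟩⟩
instance : Sub 𝕆 := ⟨fun x y => ⟨x.a - y.a, x.b - y.b⟩⟩
/-- Cayley–Dickson multiplication. -/
instance : Mul 𝕆 := ⟨fun x y => ⟨x.a * y.a - star y.b * x.b, y.b * x.a + x.b * star y.a⟩⟩
instance : SMul ℝ 𝕆 := ⟨fun r x => ⟨r • x.a, r • x.b⟩⟩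
instance : SMul ℕ 𝕆 := ⟨fun n x => ⟨n • x.a, n • x.b⟩⟩
instance : SMul ℤ 𝕆 := ⟨fun n x => ⟨n • x.a, n • x.b⟩⟩

def toProd (x : 𝕆) : Quaternion ℝ × Quaternion ℝ := (x.a, x.b)

lemma toProd_injective : Function.Injective toProd := by
  intro x y h
  cases x; cases y
  simpa [toProd, Prod.ext_iff, Octonion.mk.injEq] using h

instance : AddCommGroup 𝕆 :=
  Function.Injective.addCommGroup toProd toProd_injective rfl (fun _ _ => rfl) (fun _ => rfl)
    (fun _ _ => rfl) (fun _ _ => rfl) (fun _ _ => rfl)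

def toProdHom : 𝕆 →+ Quaternion ℝ × Quaternion ℝ :=
  { toFun := toProd, map_zero' := rfl, map_add' := fun _ _ => rfl }

instance : Module ℝ 𝕆 :=
  Function.Injective.module ℝ toProdHom toProd_injective (fun _ _ => rfl)

def toProdLin : 𝕆 →ₗ[ℝ] Quaternion ℝ × Quaternion ℝ :=
  { toFun := toProd, map_add' := fun _ _ => rfl, map_smul' := fun _ _ => rfl }

instance : NormedAddCommGroup 𝕆 := NormedAddCommGroup.induced 𝕆 _ toProdHom toProd_injective
instance : NormedSpace ℝ 𝕆 := NormedSpace.induced ℝ 𝕆 _ toProdLin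

/-- Octonionic conjugation. -/
def conj (x : 𝕆) : 𝕆 := ⟨star x.a, -x.b⟩

/-- The real part of an octonion. -/
def re (x : 𝕆) : ℝ := x.a.re

/-- The imaginary part of an octonion. -/
def im (x : 𝕆) : 𝕆 := ⟨x.a.im, x.b⟩

/-- The squared (Euclidean) norm of an octonion. -/
def normSq (x : 𝕆) : ℝ := Quaternion.normSq x.a + Quaternion.normSq x.b

/-- The (Euclidean) norm of an octonion. -/
def onorm (x : 𝕆) : ℝ := Real.sqrt (normSq x)

instance : Inv 𝕆 := ⟨fun x => (normSq x)⁻¹ • conj x⟩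

/-- The sphere of imaginary units of `𝕆`. -/
def sph : Set 𝕆 := {I | onorm I = 1 ∧ re I = 0}

/-- `tau I (α + β i) = α + β I`. -/
def tau (I : 𝕆) (z : ℂ) : 𝕆 := z.re • (1 : 𝕆) + z.im • I

end Octonion

namespace Octonion

/-- `𝕊(Ω,a,b)`: the set of imaginary units `I` with `a + bI ∈ Ω`. -/
def sSet (Ω : Set 𝕆) (a b : ℝ) : Set 𝕆 := {I | I ∈ sph ∧ a • (1 : 𝕆) + b • I ∈ Ω}

/-- `Ω` is circularly connected if every `𝕊(Ω,a,b)` is connected. -/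
def CircularlyConnected (Ω : Set 𝕆) : Prop :=
  ∀ a b : ℝ, 0 < b → IsPreconnected (sSet Ω a b)

/-- `f` is a (left) slice function on `Ω`: for every connected component of each nonempty
`𝕊(Ω,a,b)` there is a pair `(u,v)` with `f (a + bI) = u + Iv` on that component. -/
def IsSliceFunction (Ω : Set 𝕆) (f : 𝕆 → 𝕆) : Prop :=
  ∀ (a b : ℝ), 0 < b → ∀ I ∈ sSet Ω a b, ∃ u v : 𝕆,
    ∀ J ∈ connectedComponentIn (sSet Ω a b) I, f (a • (1 : 𝕆) + b • J) = u + J * v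

open Classical

/-- `(u,v)` is the stem vector of the slice function `f` at `x ∈ Ω`: for real `x` it is
`(f x, 0)`; otherwise, writing `x = a + bI` with `b = |Im x| > 0` and `I` an imaginary unit,
it is the solution of `f (a + bJ) = u + Jv` on the connected component of `𝕊(Ω,a,b)`
containing `I`. -/
def IsStemVector (Ω : Set 𝕆) (f : 𝕆 → 𝕆) (x : 𝕆) (u v : 𝕆) : Prop :=
  if im x = 0 then u = f x ∧ v = 0
  else ∀ K ∈ connectedComponentIn (sSet Ω (re x) (onorm (im x))) ((onorm (im x))⁻¹ • im x),
    f (re x • (1 : 𝕆) + onorm (im x) • K) = u + K * v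

end Octonion

namespace Octonion

/-- The standard real basis `e₀ = 1, e₁, …, e₇` of the octonions. -/
def e : Fin 8 → 𝕆 :=
  ![⟨1, 0⟩, ⟨⟨0, 1, 0, 0⟩, 0⟩, ⟨⟨0, 0, 1, 0⟩, 0⟩, ⟨⟨0, 0, 0, 1⟩, 0⟩,
    ⟨0, 1⟩, ⟨0, ⟨0, 1, 0, 0⟩⟩, ⟨0, ⟨0, 0, 1, 0⟩⟩, ⟨0, ⟨0, 0, 0, 1⟩⟩]

/-- The real coordinates `x₀, …, x₇` of an octonion. -/
def coord : Fin 8 → 𝕆 → ℝ :=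
  ![fun x => x.a.re, fun x => x.a.imI, fun x => x.a.imJ, fun x => x.a.imK,
    fun x => x.b.re, fun x => x.b.imI, fun x => x.b.imJ, fun x => x.b.imK]

/-- The spherical tangential differential operator
`L_{mn} f = x_m ∂f/∂x_n - x_n ∂f/∂x_m`. -/
def Lop (m n : Fin 8) (f : 𝕆 → 𝕆) (x : 𝕆) : 𝕆 :=
  coord m x • fderiv ℝ f x (e n) - coord n x • fderiv ℝ f x (e m)

/-- The octonionic spherical Dirac operator `Γ = -∑_{1 ≤ m < n ≤ 7} e_m (e_n L_{mn})`. -/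
def Gamma (f : 𝕆 → 𝕆) (x : 𝕆) : 𝕆 :=
  -∑ m : Fin 8, ∑ n : Fin 8,
    if 1 ≤ (m : ℕ) ∧ (m : ℕ) < (n : ℕ) then e m * (e n * Lop m n f x) else 0

end Octonion

namespace Octonion

lemma mul_a (x y : 𝕆) : (x * y).a = x.a * y.a - star y.b * x.b := rfl
lemma mul_b (x y : 𝕆) : (x * y).b = y.b * x.a + x.b * star y.a := rfl
@[simp] lemma add_a (x y : 𝕆) : (x + y).a = x.a + y.a := rfl
@[simp] lemma add_b (x y : 𝕆) : (x + y).b = x.b + y.b := rfl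
@[simp] lemma sub_a (x y : 𝕆) : (x - y).a = x.a - y.a := rfl
@[simp] lemma sub_b (x y : 𝕆) : (x - y).b = x.b - y.b := rfl
@[simp] lemma neg_a (x : 𝕆) : (-x).a = -x.a := rfl
@[simp] lemma neg_b (x : 𝕆) : (-x).b = -x.b := rfl
@[simp] lemma smul_a (r : ℝ) (x : 𝕆) : (r • x).a = r • x.a := rfl
@[simp] lemma smul_b (r : ℝ) (x : 𝕆) : (r • x).b = r • x.b := rfl
@[simp] lemma zero_a : (0 : 𝕆).a = 0 := rfl
@[simp] lemma zero_b : (0 : 𝕆).b = 0 := rfl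
@[simp] lemma one_a : (1 : 𝕆).a = 1 := rfl
@[simp] lemma one_b : (1 : 𝕆).b = 0 := rfl

lemma ev0 : e 0 = ⟨1, 0⟩ := rfl
lemma ev1 : e 1 = ⟨⟨0, 1, 0, 0⟩, 0⟩ := rfl
lemma ev2 : e 2 = ⟨⟨0, 0, 1, 0⟩, 0⟩ := rfl
lemma ev3 : e 3 = ⟨⟨0, 0, 0, 1⟩, 0⟩ := rfl
lemma ev4 : e 4 = ⟨0, 1⟩ := rfl
lemma ev5 : e 5 = ⟨0, ⟨0, 1, 0, 0⟩⟩ := rfl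
lemma ev6 : e 6 = ⟨0, ⟨0, 0, 1, 0⟩⟩ := rfl
lemma ev7 : e 7 = ⟨0, ⟨0, 0, 0, 1⟩⟩ := rfl

lemma smul_mul (r : ℝ) (x y : 𝕆) : (r • x) * y = r • (x * y) := by
  ext <;> simp [mul_a, mul_b, smul_sub, smul_add, smul_mul_assoc, mul_smul_comm, star_smul]

lemma mul_smul_right (r : ℝ) (x y : 𝕆) : x * (r • y) = r • (x * y) := by
  ext <;> simp [mul_a, mul_b, smul_sub, smul_add, smul_mul_assoc, mul_smul_comm, star_smul]

lemma sub_mul' (x y z : 𝕆) : (x - y) * z = x * z - y * z := by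
  ext <;> simp [mul_a, mul_b, sub_mul, mul_sub] <;> ring

lemma add_mul' (x y z : 𝕆) : (x + y) * z = x * z + y * z := by
  ext <;> simp [mul_a, mul_b, add_mul, mul_add] <;> ring

lemma mul_neg' (x y : 𝕆) : x * (-y) = -(x * y) := by
  ext <;> simp [mul_a, mul_b] <;> ring

lemma mul_sub'' (x y z : 𝕆) : x * (y - z) = x * y - x * z := by
  ext <;> simp [mul_a, mul_b, sub_mul, mul_sub] <;> ring

lemma emul1 (y : 𝕆) : e 1 * y = ⟨⟨-y.a.imI, y.a.re, -y.a.imK, y.a.imJ⟩, ⟨-y.b.imI, y.b.re, y.b.imK, -y.b.imJ⟩⟩ := by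
  ext <;>
    simp [mul_a, mul_b, Quaternion.re_mul, Quaternion.imI_mul, Quaternion.imJ_mul,
      Quaternion.imK_mul] <;> simp [ev1, Quaternion.re_zero, Quaternion.imI_zero, Quaternion.imJ_zero, Quaternion.imK_zero, Quaternion.re_one, Quaternion.imI_one, Quaternion.imJ_one, Quaternion.imK_one] <;>
    ring
lemma emul2 (y : 𝕆) : e 2 * y = ⟨⟨-y.a.imJ, y.a.imK, y.a.re, -y.a.imI⟩, ⟨-y.b.imJ, -y.b.imK, y.b.re, y.b.imI⟩⟩ := by
  ext <;>
    simp [mul_a, mul_b, Quaternion.re_mul, Quaternion.imI_mul, Quaternion.imJ_mul,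
      Quaternion.imK_mul] <;> simp [ev2, Quaternion.re_zero, Quaternion.imI_zero, Quaternion.imJ_zero, Quaternion.imK_zero, Quaternion.re_one, Quaternion.imI_one, Quaternion.imJ_one, Quaternion.imK_one] <;>
    ring
lemma emul3 (y : 𝕆) : e 3 * y = ⟨⟨-y.a.imK, -y.a.imJ, y.a.imI, y.a.re⟩, ⟨-y.b.imK, y.b.imJ, -y.b.imI, y.b.re⟩⟩ := by
  ext <;>
    simp [mul_a, mul_b, Quaternion.re_mul, Quaternion.imI_mul, Quaternion.imJ_mul,
      Quaternion.imK_mul] <;> simp [ev3, Quaternion.re_zero, Quaternion.imI_zero, Quaternion.imJ_zero, Quaternion.imK_zero, Quaternion.re_one, Quaternion.imI_one, Quaternion.imJ_one, Quaternion.imK_one] <;>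
    ring
lemma emul4 (y : 𝕆) : e 4 * y = ⟨⟨-y.b.re, y.b.imI, y.b.imJ, y.b.imK⟩, ⟨y.a.re, -y.a.imI, -y.a.imJ, -y.a.imK⟩⟩ := by
  ext <;>
    simp [mul_a, mul_b, Quaternion.re_mul, Quaternion.imI_mul, Quaternion.imJ_mul,
      Quaternion.imK_mul] <;> simp [ev4, Quaternion.re_zero, Quaternion.imI_zero, Quaternion.imJ_zero, Quaternion.imK_zero, Quaternion.re_one, Quaternion.imI_one, Quaternion.imJ_one, Quaternion.imK_one] <;>
    ring
lemma emul5 (y : 𝕆) : e 5 * y = ⟨⟨-y.b.imI, -y.b.re, y.b.imK, -y.b.imJ⟩, ⟨y.a.imI, y.a.re, y.a.imK, -y.a.imJ⟩⟩ := by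
  ext <;>
    simp [mul_a, mul_b, Quaternion.re_mul, Quaternion.imI_mul, Quaternion.imJ_mul,
      Quaternion.imK_mul] <;> simp [ev5, Quaternion.re_zero, Quaternion.imI_zero, Quaternion.imJ_zero, Quaternion.imK_zero, Quaternion.re_one, Quaternion.imI_one, Quaternion.imJ_one, Quaternion.imK_one] <;>
    ring
lemma emul6 (y : 𝕆) : e 6 * y = ⟨⟨-y.b.imJ, -y.b.imK, -y.b.re, y.b.imI⟩, ⟨y.a.imJ, -y.a.imK, y.a.re, y.a.imI⟩⟩ := by
  ext <;>
    simp [mul_a, mul_b, Quaternion.re_mul, Quaternion.imI_mul, Quaternion.imJ_mul,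
      Quaternion.imK_mul] <;> simp [ev6, Quaternion.re_zero, Quaternion.imI_zero, Quaternion.imJ_zero, Quaternion.imK_zero, Quaternion.re_one, Quaternion.imI_one, Quaternion.imJ_one, Quaternion.imK_one] <;>
    ring
lemma emul7 (y : 𝕆) : e 7 * y = ⟨⟨-y.b.imK, y.b.imJ, -y.b.imI, -y.b.re⟩, ⟨y.a.imK, y.a.imJ, -y.a.imI, y.a.re⟩⟩ := by
  ext <;>
    simp [mul_a, mul_b, Quaternion.re_mul, Quaternion.imI_mul, Quaternion.imJ_mul,
      Quaternion.imK_mul] <;> simp [ev7, Quaternion.re_zero, Quaternion.imI_zero, Quaternion.imJ_zero, Quaternion.imK_zero, Quaternion.re_one, Quaternion.imI_one, Quaternion.imJ_one, Quaternion.imK_one] <;>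
    ring
lemma sq1 (v : 𝕆) : e 1 * (e 1 * v) = -v := by
  simp only [emul1]
  ext <;> simp
lemma sq2 (v : 𝕆) : e 2 * (e 2 * v) = -v := by
  simp only [emul2]
  ext <;> simp
lemma sq3 (v : 𝕆) : e 3 * (e 3 * v) = -v := by
  simp only [emul3]
  ext <;> simp
lemma sq4 (v : 𝕆) : e 4 * (e 4 * v) = -v := by
  simp only [emul4]
  ext <;> simp
lemma sq5 (v : 𝕆) : e 5 * (e 5 * v) = -v := by
  simp only [emul5]
  ext <;> simp
lemma sq6 (v : 𝕆) : e 6 * (e 6 * v) = -v := by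
  simp only [emul6]
  ext <;> simp
lemma sq7 (v : 𝕆) : e 7 * (e 7 * v) = -v := by
  simp only [emul7]
  ext <;> simp
lemma B12 (v : 𝕆) : e 1 * (e 2 * (e 1 * v)) = e 2 * v := by
  simp only [emul1, emul2]
  ext <;> simp
lemma B13 (v : 𝕆) : e 1 * (e 3 * (e 1 * v)) = e 3 * v := by
  simp only [emul1, emul3]
  ext <;> simp
lemma B14 (v : 𝕆) : e 1 * (e 4 * (e 1 * v)) = e 4 * v := by
  simp only [emul1, emul4]
  ext <;> simp
lemma B15 (v : 𝕆) : e 1 * (e 5 * (e 1 * v)) = e 5 * v := by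
  simp only [emul1, emul5]
  ext <;> simp
lemma B16 (v : 𝕆) : e 1 * (e 6 * (e 1 * v)) = e 6 * v := by
  simp only [emul1, emul6]
  ext <;> simp
lemma B17 (v : 𝕆) : e 1 * (e 7 * (e 1 * v)) = e 7 * v := by
  simp only [emul1, emul7]
  ext <;> simp
lemma B21 (v : 𝕆) : e 2 * (e 1 * (e 2 * v)) = e 1 * v := by
  simp only [emul2, emul1]
  ext <;> simp
lemma B23 (v : 𝕆) : e 2 * (e 3 * (e 2 * v)) = e 3 * v := by
  simp only [emul2, emul3]
  ext <;> simp
lemma B24 (v : 𝕆) : e 2 * (e 4 * (e 2 * v)) = e 4 * v := by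
  simp only [emul2, emul4]
  ext <;> simp
lemma B25 (v : 𝕆) : e 2 * (e 5 * (e 2 * v)) = e 5 * v := by
  simp only [emul2, emul5]
  ext <;> simp
lemma B26 (v : 𝕆) : e 2 * (e 6 * (e 2 * v)) = e 6 * v := by
  simp only [emul2, emul6]
  ext <;> simp
lemma B27 (v : 𝕆) : e 2 * (e 7 * (e 2 * v)) = e 7 * v := by
  simp only [emul2, emul7]
  ext <;> simp
lemma B31 (v : 𝕆) : e 3 * (e 1 * (e 3 * v)) = e 1 * v := by
  simp only [emul3, emul1]
  ext <;> simp
lemma B32 (v : 𝕆) : e 3 * (e 2 * (e 3 * v)) = e 2 * v := by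
  simp only [emul3, emul2]
  ext <;> simp
lemma B34 (v : 𝕆) : e 3 * (e 4 * (e 3 * v)) = e 4 * v := by
  simp only [emul3, emul4]
  ext <;> simp
lemma B35 (v : 𝕆) : e 3 * (e 5 * (e 3 * v)) = e 5 * v := by
  simp only [emul3, emul5]
  ext <;> simp
lemma B36 (v : 𝕆) : e 3 * (e 6 * (e 3 * v)) = e 6 * v := by
  simp only [emul3, emul6]
  ext <;> simp
lemma B37 (v : 𝕆) : e 3 * (e 7 * (e 3 * v)) = e 7 * v := by
  simp only [emul3, emul7]
  ext <;> simp
lemma B41 (v : 𝕆) : e 4 * (e 1 * (e 4 * v)) = e 1 * v := by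
  simp only [emul4, emul1]
  ext <;> simp
lemma B42 (v : 𝕆) : e 4 * (e 2 * (e 4 * v)) = e 2 * v := by
  simp only [emul4, emul2]
  ext <;> simp
lemma B43 (v : 𝕆) : e 4 * (e 3 * (e 4 * v)) = e 3 * v := by
  simp only [emul4, emul3]
  ext <;> simp
lemma B45 (v : 𝕆) : e 4 * (e 5 * (e 4 * v)) = e 5 * v := by
  simp only [emul4, emul5]
  ext <;> simp
lemma B46 (v : 𝕆) : e 4 * (e 6 * (e 4 * v)) = e 6 * v := by
  simp only [emul4, emul6]
  ext <;> simp
lemma B47 (v : 𝕆) : e 4 * (e 7 * (e 4 * v)) = e 7 * v := by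
  simp only [emul4, emul7]
  ext <;> simp
lemma B51 (v : 𝕆) : e 5 * (e 1 * (e 5 * v)) = e 1 * v := by
  simp only [emul5, emul1]
  ext <;> simp
lemma B52 (v : 𝕆) : e 5 * (e 2 * (e 5 * v)) = e 2 * v := by
  simp only [emul5, emul2]
  ext <;> simp
lemma B53 (v : 𝕆) : e 5 * (e 3 * (e 5 * v)) = e 3 * v := by
  simp only [emul5, emul3]
  ext <;> simp
lemma B54 (v : 𝕆) : e 5 * (e 4 * (e 5 * v)) = e 4 * v := by
  simp only [emul5, emul4]
  ext <;> simp
lemma B56 (v : 𝕆) : e 5 * (e 6 * (e 5 * v)) = e 6 * v := by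
  simp only [emul5, emul6]
  ext <;> simp
lemma B57 (v : 𝕆) : e 5 * (e 7 * (e 5 * v)) = e 7 * v := by
  simp only [emul5, emul7]
  ext <;> simp
lemma B61 (v : 𝕆) : e 6 * (e 1 * (e 6 * v)) = e 1 * v := by
  simp only [emul6, emul1]
  ext <;> simp
lemma B62 (v : 𝕆) : e 6 * (e 2 * (e 6 * v)) = e 2 * v := by
  simp only [emul6, emul2]
  ext <;> simp
lemma B63 (v : 𝕆) : e 6 * (e 3 * (e 6 * v)) = e 3 * v := by
  simp only [emul6, emul3]
  ext <;> simp
lemma B64 (v : 𝕆) : e 6 * (e 4 * (e 6 * v)) = e 4 * v := by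
  simp only [emul6, emul4]
  ext <;> simp
lemma B65 (v : 𝕆) : e 6 * (e 5 * (e 6 * v)) = e 5 * v := by
  simp only [emul6, emul5]
  ext <;> simp
lemma B67 (v : 𝕆) : e 6 * (e 7 * (e 6 * v)) = e 7 * v := by
  simp only [emul6, emul7]
  ext <;> simp
lemma B71 (v : 𝕆) : e 7 * (e 1 * (e 7 * v)) = e 1 * v := by
  simp only [emul7, emul1]
  ext <;> simp
lemma B72 (v : 𝕆) : e 7 * (e 2 * (e 7 * v)) = e 2 * v := by
  simp only [emul7, emul2]
  ext <;> simp
lemma B73 (v : 𝕆) : e 7 * (e 3 * (e 7 * v)) = e 3 * v := by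
  simp only [emul7, emul3]
  ext <;> simp
lemma B74 (v : 𝕆) : e 7 * (e 4 * (e 7 * v)) = e 4 * v := by
  simp only [emul7, emul4]
  ext <;> simp
lemma B75 (v : 𝕆) : e 7 * (e 5 * (e 7 * v)) = e 5 * v := by
  simp only [emul7, emul5]
  ext <;> simp
lemma B76 (v : 𝕆) : e 7 * (e 6 * (e 7 * v)) = e 6 * v := by
  simp only [emul7, emul6]
  ext <;> simp

lemma fin_dispatch (k : Fin 8) (hk : 1 ≤ (k : ℕ)) :
    k = 1 ∨ k = 2 ∨ k = 3 ∨ k = 4 ∨ k = 5 ∨ k = 6 ∨ k = 7 := by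
  revert hk; revert k; decide

lemma sqE (n : Fin 8) (hn : 1 ≤ (n : ℕ)) (v : 𝕆) : e n * (e n * v) = -v := by
  rcases fin_dispatch n hn with rfl|rfl|rfl|rfl|rfl|rfl|rfl
  exacts [sq1 v, sq2 v, sq3 v, sq4 v, sq5 v, sq6 v, sq7 v]

lemma tripleB (m n : Fin 8) (hm : 1 ≤ (m : ℕ)) (hn : 1 ≤ (n : ℕ)) (hne : m ≠ n) (v : 𝕆) :
    e m * (e n * (e m * v)) = e n * v := by
  rcases fin_dispatch m hm with rfl|rfl|rfl|rfl|rfl|rfl|rfl <;>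
    rcases fin_dispatch n hn with rfl|rfl|rfl|rfl|rfl|rfl|rfl
  exacts [absurd rfl hne, B12 v, B13 v, B14 v, B15 v, B16 v, B17 v, B21 v, absurd rfl hne, B23 v, B24 v, B25 v, B26 v, B27 v, B31 v, B32 v, absurd rfl hne, B34 v, B35 v, B36 v, B37 v, B41 v, B42 v, B43 v, absurd rfl hne, B45 v, B46 v, B47 v, B51 v, B52 v, B53 v, B54 v, absurd rfl hne, B56 v, B57 v, B61 v, B62 v, B63 v, B64 v, B65 v, absurd rfl hne, B67 v, B71 v, B72 v, B73 v, B74 v, B75 v, B76 v, absurd rfl hne]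

lemma tripleA (m n : Fin 8) (hm : 1 ≤ (m : ℕ)) (hn : 1 ≤ (n : ℕ)) (v : 𝕆) :
    e m * (e n * (e n * v)) = -(e m * v) := by
  rw [sqE n hn, mul_neg']

end Octonion
namespace Octonion

lemma c0 (x : 𝕆) : coord 0 x = x.a.re := rfl
lemma c1 (x : 𝕆) : coord 1 x = x.a.imI := rfl
lemma c2 (x : 𝕆) : coord 2 x = x.a.imJ := rfl
lemma c3 (x : 𝕆) : coord 3 x = x.a.imK := rfl
lemma c4 (x : 𝕆) : coord 4 x = x.b.re := rfl
lemma c5 (x : 𝕆) : coord 5 x = x.b.imI := rfl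
lemma c6 (x : 𝕆) : coord 6 x = x.b.imJ := rfl
lemma c7 (x : 𝕆) : coord 7 x = x.b.imK := rfl

lemma coord_add (l : Fin 8) (x y : 𝕆) : coord l (x + y) = coord l x + coord l y := by
  fin_cases l <;> rfl

lemma coord_smul (l : Fin 8) (r : ℝ) (x : 𝕆) : coord l (r • x) = r * coord l x := by
  fin_cases l <;> rfl

lemma coord_sub (l : Fin 8) (x y : 𝕆) : coord l (x - y) = coord l x - coord l y := by
  fin_cases l <;> rfl

lemma coord_e (l k : Fin 8) : coord l (e k) = if l = k then 1 else 0 := by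
  fin_cases l <;> fin_cases k <;> rfl

/-- The Euclidean inner product on 𝕆 in coordinates. -/
def inn (x y : 𝕆) : ℝ := ∑ l, coord l x * coord l y

lemma inn_comm (x y : 𝕆) : inn x y = inn y x := by
  simp [inn, mul_comm]

lemma inn_add_left (x y z : 𝕆) : inn (x + y) z = inn x z + inn y z := by
  simp [inn, coord_add, add_mul, Finset.sum_add_distrib]

lemma inn_add_right (x y z : 𝕆) : inn x (y + z) = inn x y + inn x z := by
  rw [inn_comm, inn_add_left, inn_comm y x, inn_comm z x]

lemma inn_sub_left (x y z : 𝕆) : inn (x - y) z = inn x z - inn y z := by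
  simp [inn, coord_sub, sub_mul, Finset.sum_sub_distrib]

lemma inn_sub_right (x y z : 𝕆) : inn x (y - z) = inn x y - inn x z := by
  rw [inn_comm, inn_sub_left, inn_comm y x, inn_comm z x]

lemma inn_smul_left (r : ℝ) (x z : 𝕆) : inn (r • x) z = r * inn x z := by
  simp [inn, coord_smul, Finset.mul_sum, mul_assoc]

lemma inn_smul_right (r : ℝ) (x z : 𝕆) : inn x (r • z) = r * inn x z := by
  rw [inn_comm, inn_smul_left, inn_comm]

lemma inn_e_left (k : Fin 8) (x : 𝕆) : inn (e k) x = coord k x := by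
  simp [inn, coord_e, ite_mul]

lemma inn_e_right (k : Fin 8) (x : 𝕆) : inn x (e k) = coord k x := by
  rw [inn_comm, inn_e_left]

lemma inn_e_e (k l : Fin 8) : inn (e k) (e l) = if k = l then 1 else 0 := by
  rw [inn_e_left, coord_e]

lemma normSq_eq_inn (x : 𝕆) : normSq x = inn x x := by
  simp [inn, Fin.sum_univ_eight, normSq, Quaternion.normSq_def', c0, c1, c2, c3, c4, c5, c6, c7]
  ring

lemma normSq_nonneg (x : 𝕆) : 0 ≤ normSq x := by
  rw [normSq_eq_inn, inn]
  exact Finset.sum_nonneg fun l _ => mul_self_nonneg _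

lemma normSq_pos (x : 𝕆) (hx : x ≠ 0) : 0 < normSq x := by
  rcases lt_or_eq_of_le (normSq_nonneg x) with h | h
  · exact h
  · exfalso
    apply hx
    have h' : Quaternion.normSq x.a + Quaternion.normSq x.b = 0 := h.symm
    have ha : Quaternion.normSq x.a = 0 ∧ Quaternion.normSq x.b = 0 := by
      constructor <;>
        nlinarith [Quaternion.normSq_nonneg (a := x.a), Quaternion.normSq_nonneg (a := x.b)]
    ext <;>
      simp [Quaternion.normSq_eq_zero.mp ha.1, Quaternion.normSq_eq_zero.mp ha.2]

lemma onorm_pos (x : 𝕆) (hx : x ≠ 0) : 0 < onorm x :=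
  Real.sqrt_pos.mpr (normSq_pos x hx)

lemma sq_onorm (x : 𝕆) : onorm x ^ 2 = normSq x := Real.sq_sqrt (normSq_nonneg x)

lemma normSq_smul (r : ℝ) (x : 𝕆) : normSq (r • x) = r ^ 2 * normSq x := by
  rw [normSq_eq_inn, normSq_eq_inn, inn_smul_left, inn_smul_right]
  ring

lemma onorm_eq_one (x : 𝕆) (h : normSq x = 1) : onorm x = 1 := by
  rw [onorm, h, Real.sqrt_one]

-- re / im lemmas
lemma re_eq_coord (x : 𝕆) : re x = coord 0 x := rfl

lemma coord_zero_im (x : 𝕆) : coord 0 (im x) = 0 := rfl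

lemma coord_im (l : Fin 8) (hl : 1 ≤ (l : ℕ)) (x : 𝕆) : coord l (im x) = coord l x := by
  fin_cases l <;> first | exact absurd hl (by decide) | rfl

lemma im_add (x y : 𝕆) : im (x + y) = im x + im y := by
  ext <;> simp [im]

lemma im_smul (r : ℝ) (x : 𝕆) : im (r • x) = r • im x := by
  ext <;> simp [im]

lemma im_e (l : Fin 8) (hl : 1 ≤ (l : ℕ)) : im (e l) = e l := by
  fin_cases l <;> first | exact absurd hl (by decide) | rfl

lemma re_im (x : 𝕆) : re (im x) = 0 := coord_zero_im x

lemma self_eq_re_add_im (x : 𝕆) : x = re x • (1 : 𝕆) + im x := by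
  ext <;> simp [re, im, Quaternion.re_one, Quaternion.imI_one, Quaternion.imJ_one, Quaternion.imK_one]

lemma im_decomp (x : 𝕆) :
    im x = coord 1 x • e 1 + coord 2 x • e 2 + coord 3 x • e 3 + coord 4 x • e 4 +
      coord 5 x • e 5 + coord 6 x • e 6 + coord 7 x • e 7 := by
  rw [c1, c2, c3, c4, c5, c6, c7]
  ext <;> simp [im, Quaternion.re_smul, Quaternion.imI_smul, Quaternion.imJ_smul, Quaternion.imK_smul] <;>
    simp [ev1, ev2, ev3, ev4, ev5, ev6, ev7, Quaternion.re_zero, Quaternion.imI_zero, Quaternion.imJ_zero, Quaternion.imK_zero, Quaternion.re_one, Quaternion.imI_one, Quaternion.imJ_one, Quaternion.imK_one]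

end Octonion
namespace Octonion

lemma im_sub (x y : 𝕆) : im (x - y) = im x - im y := by
  ext <;> simp [im]

lemma coord_zero_e (k : Fin 8) (hk : 1 ≤ (k : ℕ)) : coord 0 (e k) = 0 := by
  rw [coord_e, if_neg]
  exact fun h => absurd (congrArg Fin.val h).symm (by omega)

lemma key_deriv (Ω : Set 𝕆) (hΩo : IsOpen Ω) (f : 𝕆 → 𝕆) (hC1 : ContDiffOn ℝ 1 f Ω)
    (x : 𝕆) (hx : x ∈ Ω) (him : im x ≠ 0) (u v : 𝕆)
    (hsv : ∀ K ∈ connectedComponentIn (sSet Ω (re x) (onorm (im x))) ((onorm (im x))⁻¹ • im x),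
      f (re x • (1 : 𝕆) + onorm (im x) • K) = u + K * v)
    (m n : Fin 8) (hm : 1 ≤ (m : ℕ)) (hn : 1 ≤ (n : ℕ)) (hne : m ≠ n) :
    fderiv ℝ f x (coord m x • e n - coord n x • e m)
      = (onorm (im x))⁻¹ • ((coord m x • e n - coord n x • e m) * v) := by
  set b := onorm (im x) with hbdef
  have hb : 0 < b := onorm_pos _ him
  set p : 𝕆 := coord m x • e m + coord n x • e n with hp
  set w : 𝕆 := coord m x • e n - coord n x • e m with hw
  set c : ℝ → 𝕆 := fun t => x + (Real.cos t - 1) • p + Real.sin t • w with hc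
  have hc0 : c 0 = x := by simp [hc]
  have hccont : Continuous c := by fun_prop
  have hmem : (0 : ℝ) ∈ c ⁻¹' Ω := by simp [Set.mem_preimage, hc0, hx]
  obtain ⟨δ, hδpos, hδ⟩ := Metric.isOpen_iff.mp (hΩo.preimage hccont) 0 hmem
  -- real part constant along the circle
  have hre : ∀ t, re (c t) = re x := by
    intro t
    simp [hc, re_eq_coord, coord_add, coord_smul, hp, hw, coord_sub,
      coord_zero_e m hm, coord_zero_e n hn]
  -- imaginary part along the circle
  have himp : im p = p := by rw [hp, im_add, im_smul, im_smul, im_e m hm, im_e n hn]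
  have himw : im w = w := by rw [hw, im_sub, im_smul, im_smul, im_e m hm, im_e n hn]
  have himc : ∀ t, im (c t) = im x + (Real.cos t - 1) • p + Real.sin t • w := by
    intro t
    rw [hc]
    simp only [im_add, im_smul, himp, himw]
  -- inner product computations
  have hinpp : inn p p = coord m x ^ 2 + coord n x ^ 2 := by
    simp [hp, inn_add_left, inn_add_right, inn_smul_left, inn_smul_right, inn_e_e, hne, hne.symm]
    ring
  have hinww : inn w w = coord m x ^ 2 + coord n x ^ 2 := by
    simp [hw, inn_sub_left, inn_sub_right, inn_smul_left, inn_smul_right, inn_e_e, hne, hne.symm]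
    ring
  have hinpw : inn p w = 0 := by
    simp [hp, hw, inn_add_left, inn_sub_right, inn_smul_left, inn_smul_right, inn_e_e,
      hne, hne.symm]
    ring
  have hinqp : inn (im x) p = coord m x ^ 2 + coord n x ^ 2 := by
    simp [hp, inn_add_right, inn_smul_right, inn_e_right, coord_im m hm, coord_im n hn]
    ring
  have hinqw : inn (im x) w = 0 := by
    simp [hw, inn_sub_right, inn_smul_right, inn_e_right, coord_im m hm, coord_im n hn]
    ring
  have hinpq : inn p (im x) = coord m x ^ 2 + coord n x ^ 2 := by rw [inn_comm]; exact hinqp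
  have hinwq : inn w (im x) = 0 := by rw [inn_comm]; exact hinqw
  have hinwp : inn w p = 0 := by rw [inn_comm]; exact hinpw
  have hq : inn (im x) (im x) = b ^ 2 := by rw [← normSq_eq_inn, ← sq_onorm]
  have hns : ∀ t, normSq (im (c t)) = b ^ 2 := by
    intro t
    rw [himc t, normSq_eq_inn]
    simp only [inn_add_left, inn_add_right, inn_smul_left, inn_smul_right, hq, hinqp, hinqw,
      hinpq, hinwq, hinpw, hinwp, hinpp, hinww]
    linear_combination (coord m x ^ 2 + coord n x ^ 2) * (Real.sin_sq_add_cos_sq t)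
  -- the moving imaginary unit
  set K : ℝ → 𝕆 := fun t => b⁻¹ • (im x + (Real.cos t - 1) • p + Real.sin t • w) with hK
  have hKim : ∀ t, K t = b⁻¹ • im (c t) := by intro t; rw [hK, himc]
  have hK0 : K 0 = b⁻¹ • im x := by simp [hK]
  have hKsph : ∀ t, K t ∈ sph := by
    intro t
    constructor
    · apply onorm_eq_one
      rw [hKim, normSq_smul, hns]
      field_simp
    · rw [hKim, re_eq_coord, coord_smul, coord_zero_im, mul_zero]
  have hpt : ∀ t, re x • (1 : 𝕆) + b • K t = c t := by
    intro t
    rw [hKim, smul_smul, mul_inv_cancel₀ hb.ne', one_smul, ← hre t]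
    exact (self_eq_re_add_im (c t)).symm
  have hKs : ∀ t, |t| < δ → K t ∈ sSet Ω (re x) b := by
    intro t ht
    refine ⟨hKsph t, ?_⟩
    rw [hpt]
    have : t ∈ Metric.ball (0 : ℝ) δ := by simpa [Real.dist_eq] using ht
    exact hδ this
  have hKcont : Continuous K := by fun_prop
  have hKcc : ∀ t, |t| < δ → K t ∈ connectedComponentIn (sSet Ω (re x) b) (b⁻¹ • im x) := by
    intro t ht
    have hsub : K '' Set.uIcc 0 t ⊆ sSet Ω (re x) b := by
      rintro _ ⟨s, hs, rfl⟩
      apply hKs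
      have habs : |s| ≤ |t| := by
        rcases Set.mem_uIcc.mp hs with ⟨h1, h2⟩ | ⟨h1, h2⟩
        · rw [abs_of_nonneg h1]; exact h2.trans (le_abs_self t)
        · rw [abs_of_nonpos h2]; exact (neg_le_neg h1).trans (neg_le_abs t)
      exact lt_of_le_of_lt habs ht
    have hpre : IsPreconnected (K '' Set.uIcc 0 t) :=
      isPreconnected_uIcc.image K hKcont.continuousOn
    have h0 : b⁻¹ • im x ∈ K '' Set.uIcc 0 t := ⟨0, Set.left_mem_uIcc, hK0⟩
    exact hpre.subset_connectedComponentIn h0 hsub ⟨t, Set.right_mem_uIcc, rfl⟩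
  have hfval : ∀ t, |t| < δ → f (c t) = u + K t * v := by
    intro t ht
    rw [← hpt t]
    exact hsv (K t) (hKcc t ht)
  have hKmul : ∀ t, K t * v
      = b⁻¹ • (im x * v) + (b⁻¹ * (Real.cos t - 1)) • (p * v) + (b⁻¹ * Real.sin t) • (w * v) := by
    intro t
    rw [hK]
    rw [smul_mul, add_mul', add_mul', smul_mul, smul_mul, smul_add, smul_add, smul_smul, smul_smul]
  set φ : ℝ → 𝕆 := fun t => (u + b⁻¹ • (im x * v)) + (b⁻¹ * (Real.cos t - 1)) • (p * v)
    + (b⁻¹ * Real.sin t) • (w * v) with hφdef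
  have heq : (fun t => f (c t)) =ᶠ[nhds 0] φ := by
    have hIoo : Set.Ioo (-δ) δ ∈ nhds (0 : ℝ) := Ioo_mem_nhds (by linarith) hδpos
    filter_upwards [hIoo] with t ht
    have habs : |t| < δ := abs_lt.mpr ⟨ht.1, ht.2⟩
    rw [hfval t habs, hKmul t, hφdef]
    abel_nf
  have hd1 : HasDerivAt (fun t : ℝ => (b⁻¹ * (Real.cos t - 1)) • (p * v))
      ((b⁻¹ * -Real.sin 0) • (p * v)) 0 :=
    (((Real.hasDerivAt_cos 0).sub_const 1).const_mul b⁻¹).smul_const _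
  have hd2 : HasDerivAt (fun t : ℝ => (b⁻¹ * Real.sin t) • (w * v))
      ((b⁻¹ * Real.cos 0) • (w * v)) 0 :=
    ((Real.hasDerivAt_sin 0).const_mul b⁻¹).smul_const _
  have hφ : HasDerivAt φ (b⁻¹ • (w * v)) 0 := by
    have h := (hd1.const_add (u + b⁻¹ • (im x * v))).add hd2
    simp only [Real.sin_zero, Real.cos_zero, neg_zero, mul_zero, zero_smul, zero_add, mul_one] at h
    exact h
  have hcd : HasDerivAt c w 0 := by
    have h := ((((Real.hasDerivAt_cos 0).sub_const 1).smul_const p).const_add x).add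
      ((Real.hasDerivAt_sin 0).smul_const w)
    simp only [Real.sin_zero, Real.cos_zero, neg_zero, zero_smul, zero_add, one_smul] at h
    exact h
  have hfd : DifferentiableAt ℝ f x :=
    (hC1.contDiffAt (hΩo.mem_nhds hx)).differentiableAt one_ne_zero
  have hfc : HasDerivAt (fun t => f (c t)) (fderiv ℝ f x w) 0 := by
    have hl : HasFDerivAt f (fderiv ℝ f x) (c 0) := by rw [hc0]; exact hfd.hasFDerivAt
    exact hl.comp_hasDerivAt 0 hcd
  exact hfc.unique (hφ.congr_of_eventuallyEq heq)

end Octonion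
lemma aux_sum {M : Type*} [AddCommGroup M] [Module ℝ M] (r : Fin 8 → ℝ) (A : Fin 8 → M) :
    -∑ m : Fin 8, ∑ n : Fin 8,
        (if 1 ≤ (m : ℕ) ∧ (m : ℕ) < (n : ℕ) then r m • -(A m) - r n • A n else 0)
      = (6 : ℝ) • (r 1 • A 1 + r 2 • A 2 + r 3 • A 3 + r 4 • A 4 + r 5 • A 5 + r 6 • A 6
          + r 7 • A 7) := by
  simp only [Fin.sum_univ_eight,
    show ((0 : Fin 8) : ℕ) = 0 from rfl, show ((1 : Fin 8) : ℕ) = 1 from rfl,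
    show ((2 : Fin 8) : ℕ) = 2 from rfl, show ((3 : Fin 8) : ℕ) = 3 from rfl,
    show ((4 : Fin 8) : ℕ) = 4 from rfl, show ((5 : Fin 8) : ℕ) = 5 from rfl,
    show ((6 : Fin 8) : ℕ) = 6 from rfl, show ((7 : Fin 8) : ℕ) = 7 from rfl]
  norm_num
  module

open Octonion in
/-- for a `C¹` slice function `f` on a domain `Ω ⊆ 𝕆` and any `x ∈ Ω` with
`Im x ≠ 0`, the stem vector `(u,v)` of `f` at `x` satisfies `6 (Im x) v = |Im x| Γf(x)`. -/
theorem stmt15 (Ω : Set 𝕆) (hΩo : IsOpen Ω) (hΩc : IsConnected Ω)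
    (f : 𝕆 → 𝕆) (hf : IsSliceFunction Ω f) (hC1 : ContDiffOn ℝ 1 f Ω)
    (x : 𝕆) (hx : x ∈ Ω) (him : im x ≠ 0) (u v : 𝕆) (hs : IsStemVector Ω f x u v) :
    (6 : ℝ) • (im x * v) = onorm (im x) • Gamma f x := by
  classical
  rw [IsStemVector, if_neg him] at hs
  set b := onorm (im x) with hbdef
  have hb : 0 < b := onorm_pos _ him
  have hkey : ∀ m n : Fin 8, 1 ≤ (m : ℕ) → 1 ≤ (n : ℕ) → m ≠ n →
      Lop m n f x = b⁻¹ • (coord m x • (e n * v) - coord n x • (e m * v)) := by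
    intro m n hm hn hne
    have h := key_deriv Ω hΩo f hC1 x hx him u v hs m n hm hn hne
    rw [Lop, ← (fderiv ℝ f x).map_smul, ← (fderiv ℝ f x).map_smul, ← (fderiv ℝ f x).map_sub,
      h, sub_mul', smul_mul, smul_mul]
  have hterm : ∀ m n : Fin 8, 1 ≤ (m : ℕ) → (m : ℕ) < (n : ℕ) →
      e m * (e n * Lop m n f x)
        = b⁻¹ • (coord m x • -(e m * v) - coord n x • (e n * v)) := by
    intro m n hm hlt
    have hn : 1 ≤ (n : ℕ) := by omega
    have hne : m ≠ n := fun h => absurd (congrArg Fin.val h) (by omega)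
    rw [hkey m n hm hn hne, mul_smul_right, mul_smul_right, mul_sub'', mul_smul_right,
      mul_smul_right, mul_sub'', mul_smul_right, mul_smul_right,
      tripleA m n hm hn v, tripleB m n hm hn hne v]
  have hGamma : Gamma f x = b⁻¹ • ((6 : ℝ) • (im x * v)) := by
    rw [Gamma]
    have hif : ∀ m n : Fin 8,
        (if 1 ≤ (m : ℕ) ∧ (m : ℕ) < (n : ℕ) then e m * (e n * Lop m n f x) else 0)
          = b⁻¹ • (if 1 ≤ (m : ℕ) ∧ (m : ℕ) < (n : ℕ) then
              coord m x • -(e m * v) - coord n x • (e n * v) else 0) := by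
      intro m n
      by_cases h : 1 ≤ (m : ℕ) ∧ (m : ℕ) < (n : ℕ)
      · rw [if_pos h, if_pos h, hterm m n h.1 h.2]
      · rw [if_neg h, if_neg h, smul_zero]
    simp only [hif, ← Finset.smul_sum, ← smul_neg]
    congr 1
    have hRHS : im x * v
        = coord 1 x • (e 1 * v) + coord 2 x • (e 2 * v) + coord 3 x • (e 3 * v)
          + coord 4 x • (e 4 * v) + coord 5 x • (e 5 * v) + coord 6 x • (e 6 * v)
          + coord 7 x • (e 7 * v) := by
      rw [im_decomp x]
      simp only [add_mul', smul_mul]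
    rw [hRHS]
    exact aux_sum (fun l => coord l x) (fun l => e l * v)
  rw [hGamma, hbdef, smul_smul, mul_inv_cancel₀ hb.ne', one_smul]
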